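/- Let P, P̃, μ be measures on a common measurable space and π a coupling between P and P̃ (a measure on the product with marginals P and P̃). If μ is subordinate to P, then there exist measures μ̃ and π̃ such that π̃ is subordinate to π, μ̃ is subordinate to P̃, μ̃ has the same total mass as μ, and π̃ is a coupling between μ and μ̃. -/
import Mathlib


open MeasureTheory Set
open scoped ENNReal

/-- If `π` is a coupling between `P` and `P̃`, and `μ` is subordinate to `P`, then there are
measures `μ̃` subordinate to `P̃` and `π̃` subordinate to `π` such that `μ̃` has the same total
mass as `μ` and `π̃` is a coupling between `μ` and `μ̃`. -/
theorem exists_transport_of_subordinate {X : Type*} [MeasurableSpace X]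
    (P Ptilde μ : Measure X) [SigmaFinite P] [SigmaFinite Ptilde] [SigmaFinite μ]
    (π : Measure (X × X)) (hfst : π.fst = P) (hsnd : π.snd = Ptilde)
    (hsub : ∀ E : Set X, MeasurableSet E → μ E ≤ P E) :
    ∃ (μtilde : Measure X) (πtilde : Measure (X × X)),
      (∀ E : Set (X × X), MeasurableSet E → πtilde E ≤ π E) ∧
      (∀ E : Set X, MeasurableSet E → μtilde E ≤ Ptilde E) ∧
      μtilde Set.univ = μ Set.univ ∧
      πtilde.fst = μ ∧ πtilde.snd = μtilde := by
  have hle : μ ≤ P := Measure.le_iff.mpr hsub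
  have habs : μ ≪ P := hle.absolutelyContinuous
  set f : X → ℝ≥0∞ := μ.rnDeriv P with hf_def
  have hf : Measurable f := μ.measurable_rnDeriv P
  have hμeq : P.withDensity f = μ := Measure.withDensity_rnDeriv_eq μ P habs
  have hf1 : f ≤ᵐ[P] 1 := Measure.rnDeriv_le_one_of_le hle
  set πt : Measure (X × X) := π.withDensity (fun p => f p.1) with hπt_def
  have hfcomp : Measurable (fun p : X × X => f p.1) := hf.comp measurable_fst
  -- a.e. bound on π
  have hf1π : ∀ᵐ p : X × X ∂π, f p.1 ≤ 1 := by
    have hmeas : MeasurableSet {x | ¬ f x ≤ 1} := by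
      simpa [not_le] using (measurableSet_lt (measurable_const : Measurable fun _ : X => (1:ℝ≥0∞)) hf)
    have h0 : P {x | ¬ f x ≤ 1} = 0 := by
      have := hf1
      rw [Filter.EventuallyLE, ae_iff] at this
      simpa using this
    rw [ae_iff]
    have heq : {p : X × X | ¬ f p.1 ≤ 1} = Prod.fst ⁻¹' {x | ¬ f x ≤ 1} := rfl
    show π {p : X × X | ¬ f p.1 ≤ 1} = 0
    rw [heq, ← Measure.fst_apply hmeas, hfst]
    exact h0
  have hπtle : ∀ E : Set (X × X), MeasurableSet E → πt E ≤ π E := by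
    intro E hE
    rw [hπt_def, withDensity_apply _ hE]
    calc ∫⁻ p in E, f p.1 ∂π ≤ ∫⁻ _ in E, 1 ∂π :=
          lintegral_mono_ae (ae_restrict_of_ae hf1π)
      _ = π E := by simp
  have hπtfst : πt.fst = μ := by
    ext E hE
    rw [Measure.fst_apply hE, hπt_def, withDensity_apply _ (measurable_fst hE)]
    have : ∫⁻ p in Prod.fst ⁻¹' E, f p.1 ∂π = ∫⁻ x in E, f x ∂π.fst := by
      rw [Measure.fst, setLIntegral_map hE hf measurable_fst]
    rw [this, hfst, ← withDensity_apply _ hE, hμeq]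
  refine ⟨πt.snd, πt, hπtle, ?_, ?_, hπtfst, rfl⟩
  · intro E hE
    rw [Measure.snd_apply hE, ← hsnd, Measure.snd_apply hE]
    exact hπtle _ (measurable_snd hE)
  · rw [Measure.snd_apply MeasurableSet.univ, preimage_univ, ← hπtfst,
      Measure.fst_apply MeasurableSet.univ, preimage_univ]
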